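/- Fix a circular sequence s over {A,C,G,T} and k ≥ 2. Every circular sequence x with C_k(x) = C_k(s) corresponds to an Eulerian cycle of the k-mer graph B_k(s), every Eulerian cycle of B_k(s) spells a circular sequence x with C_k(x) = C_k(s), and two Eulerian cycles of B_k(s) that are distinct up to edge multiplicities spell distinct circular sequences. Consequently the number of circular sequences x (up to cyclic shift) with C_k(x) = C_k(s) equals ec(B_k(s)), the number of Eulerian cycles of B_k(s) distinct up to edge multiplicity. -/

import Mathlib

/-!
Formalization of definitions from "Partial DNA Assembly: A Rate-Distortion
Perspective" (Shomorony, Kamath, Xia, Courtade, Tse).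
-/

open Relation

namespace DNAAssembly

noncomputable section

/-- The DNA alphabet `Σ = {A,C,G,T}`. -/
abbrev Sym : Type := Fin 4

/-- Strings over the DNA alphabet. -/
abbrev Str : Type := List Sym

/-- The cyclic substring `s[t : t+ℓ-1]` of a circular sequence `s` of length `G`. -/
def substr {G : ℕ} (s : ZMod G → Sym) (t : ZMod G) (ℓ : ℕ) : Str :=
  (List.range ℓ).map (fun j : ℕ => s (t + (j : ZMod G)))


theorem substr_length {G : ℕ} (s : ZMod G → Sym) (t : ZMod G) (ℓ : ℕ) :
    (substr s t ℓ).length = ℓ := by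
  rw [substr, List.length_map, List.length_range]

theorem substr_getElem {G : ℕ} (s : ZMod G → Sym) (t : ZMod G) (ℓ i : ℕ)
    (h : i < (substr s t ℓ).length) :
    (substr s t ℓ)[i] = s (t + (i : ZMod G)) := by
  simp only [substr, List.getElem_map, List.getElem_range]

theorem substr_take {G : ℕ} (s : ZMod G → Sym) (t : ZMod G) (k : ℕ) :
    (substr s t k).take (k - 1) = substr s t (k - 1) := by
  rw [substr, substr, ← List.map_take, List.take_range, Nat.min_eq_left (Nat.sub_le k 1)]

theorem substr_drop {G : ℕ} (s : ZMod G → Sym) (t : ZMod G) (k : ℕ) :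
    (substr s t k).drop 1 = substr s (t + 1) (k - 1) := by
  apply List.ext_getElem
  · rw [List.length_drop, substr_length, substr_length]
  · intro i h1 h2
    rw [List.getElem_drop, substr_getElem, substr_getElem]
    congr 1
    push_cast
    ring

/-- `t₁, t₂` are the positions of the two copies of a (maximal) repeat of
length `ℓ` in the circular sequence `s`. -/
def IsRepeatAt {G : ℕ} (s : ZMod G → Sym) (ℓ : ℕ) (t₁ t₂ : ZMod G) : Prop :=
  t₁ ≠ t₂ ∧ substr s t₁ ℓ = substr s t₂ ℓ ∧
    s (t₁ - 1) ≠ s (t₂ - 1) ∧ s (t₁ + (ℓ : ZMod G)) ≠ s (t₂ + (ℓ : ZMod G))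

/-- `t₁, t₂, t₃` are the positions of the three copies of a (maximal) triple repeat of
length `ℓ` in `s`: the three copies agree and they cannot all be extended in a
common direction. -/
def IsTripleRepeatAt {G : ℕ} (s : ZMod G → Sym) (ℓ : ℕ) (t₁ t₂ t₃ : ZMod G) : Prop :=
  t₁ ≠ t₂ ∧ t₁ ≠ t₃ ∧ t₂ ≠ t₃ ∧
  substr s t₁ ℓ = substr s t₂ ℓ ∧ substr s t₂ ℓ = substr s t₃ ℓ ∧
  ¬(s (t₁ - 1) = s (t₂ - 1) ∧ s (t₂ - 1) = s (t₃ - 1)) ∧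
  ¬(s (t₁ + (ℓ : ZMod G)) = s (t₂ + (ℓ : ZMod G)) ∧
      s (t₂ + (ℓ : ZMod G)) = s (t₃ + (ℓ : ZMod G)))

/-- The copy `s[t : t+ℓ-1]` is bridged by the set of reads `R` (given by their
starting positions, all reads having length `L`): some read extends strictly
beyond the copy on both sides. -/
def BridgedCopy {G : ℕ} (R : Finset (ZMod G)) (L : ℕ) (t : ZMod G) (ℓ : ℕ) : Prop :=
  ∃ p ∈ R, ∃ i : ℕ, 0 < i ∧ i + ℓ + 1 ≤ L ∧ t = p + (i : ZMod G)

/-- The read set `R` `k`-covers the circular genome: a read starts in every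
window of `k` consecutive positions. -/
def KCovers {G : ℕ} (R : Finset (ZMod G)) (k : ℕ) : Prop :=
  ∀ t : ZMod G, ∃ p ∈ R, ∃ j : ℕ, j < k ∧ p = t + (j : ZMod G)

/-- Two repeats (at positions `a₁,a₂`, length `ℓ`, and `b₁,b₂`, length `m`) are
linked with link length `link`, i.e. `a₂ < b₁ ≤ a₂ + ℓ + 1` and
`link = a₂ + ℓ + 1 - b₁`. -/
def LinkedRepeats {G : ℕ} (s : ZMod G → Sym) (ℓ m : ℕ) (a₁ a₂ b₁ b₂ : ZMod G)
    (link : ℕ) : Prop :=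
  IsRepeatAt s ℓ a₁ a₂ ∧ IsRepeatAt s m b₁ b₂ ∧
  ∃ d : ℕ, 1 ≤ d ∧ d ≤ ℓ + 1 ∧ b₁ = a₂ + (d : ZMod G) ∧ link = ℓ + 1 - d

/-! ### Directed multigraphs with edge multiplicities, Eulerian cycles -/

/-- The number of indices at which `a` occurs in the list `w`. -/
def countIn {α : Type} (w : List α) (a : α) : ℕ :=
  Nat.card {i : Fin w.length // w.get i = a}

/-- `w` is a (nonempty) closed walk with respect to source/target maps. -/
def ClosedChain {E V : Type} (src tgt : E → V) (w : List E) : Prop :=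
  w ≠ [] ∧ List.Chain' (fun e f => tgt e = src f) w ∧
    ∀ e f, w.getLast? = some e → w.head? = some f → tgt e = src f

/-- A directed multigraph: edges `E` between vertices `V`, each edge carrying a
multiplicity (number of parallel copies).  Walks are lists of edges, so that
parallel copies of the same edge are indistinguishable, i.e. walks are
automatically considered "up to edge multiplicity". -/
structure MultiGraph where
  V : Type
  E : Type
  src : E → V
  tgt : E → V
  mult : E → ℕ

/-- An Eulerian cycle of a multigraph: a closed walk traversing each edge
exactly as many times as its multiplicity. -/
def MultiGraph.IsEulerianCycle (M : MultiGraph) (w : List M.E) : Prop :=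
  ClosedChain M.src M.tgt w ∧ ∀ e : M.E, countIn w e = M.mult e

/-- The number of Eulerian cycles of a multigraph, distinct up to edge
multiplicity (automatic in this representation) and up to rotation (cycles
have no distinguished starting point). -/
def MultiGraph.ec (M : MultiGraph) : ℕ :=
  Nat.card (Quot (fun w w' : {w : List M.E // M.IsEulerianCycle w} =>
    ∃ n : ℕ, w'.val = w.val.rotate n))

/-- Out-degree of a vertex (counting parallel copies of edges). -/
def MultiGraph.outDeg (M : MultiGraph) (v : M.V) : ℕ :=
  Nat.card {p : M.E × ℕ // M.src p.1 = v ∧ p.2 < M.mult p.1}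

/-- In-degree of a vertex (counting parallel copies of edges). -/
def MultiGraph.inDeg (M : MultiGraph) (v : M.V) : ℕ :=
  Nat.card {p : M.E × ℕ // M.tgt p.1 = v ∧ p.2 < M.mult p.1}

/-- One-step adjacency along an edge of positive multiplicity. -/
def MultiGraph.Adj (M : MultiGraph) (u v : M.V) : Prop :=
  ∃ e, 0 < M.mult e ∧ M.src e = u ∧ M.tgt e = v

/-- Connectivity (on the vertices of positive degree) of a multigraph. -/
def MultiGraph.Connected (M : MultiGraph) : Prop :=
  ∀ u v : M.V, 0 < M.outDeg u + M.inDeg u → 0 < M.outDeg v + M.inDeg v →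
    Relation.ReflTransGen M.Adj u v

/-! ### The `k`-mer graph `B_k(s)` -/

/-- The `k`-mer graph `B_k(s)` of a circular sequence `s`: vertices are
`(k-1)`-mers, edges are `k`-mers, an edge `x` goes from its `(k-1)`-prefix to its
`(k-1)`-suffix, with multiplicity the number of occurrences of `x` in `s`.
(Strings that are not `k`-mers of `s` get multiplicity `0` and are irrelevant.) -/
def kmerGraph {G : ℕ} (s : ZMod G → Sym) (k : ℕ) : MultiGraph where
  V := Str
  E := Str
  src e := e.take (k - 1)
  tgt e := e.drop 1
  mult e := Nat.card {t : ZMod G // substr s t k = e}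

/-- The multiset `C_k(x)` of all length-`k` cyclic substrings (`k`-mer composition)
of a circular sequence `x` of positive length `n`. -/
def Ckmul {n : ℕ} (hn : 0 < n) (x : ZMod n → Sym) (k : ℕ) : Multiset Str :=
  haveI : NeZero n := ⟨hn.ne'⟩
  Multiset.map (fun t => substr x t k) Finset.univ.val

/-- The closed walk in the `k`-mer graph corresponding to the circular sequence
`x` itself: its `i`-th edge is the `k`-mer starting at position `i`. -/
def genomeWalk {G : ℕ} (x : ZMod G → Sym) (k : ℕ) : List Str :=
  (List.range G).map (fun i => substr x (i : ZMod G) k)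

/-- The list of first symbols of the edge labels along a walk (the string
spelled by a closed walk, read circularly). -/
def listHeads (w : List Str) : List Sym :=
  w.map (fun e => e.headD 0)

/-- The circular sequence determined by a list of symbols. -/
def circOf (l : List Sym) : ZMod l.length → Sym :=
  fun i => l.getD i.val 0

/-- The number of (cyclic) occurrences of the pattern `p` in the cyclic word `w`. -/
def cyclicOccCount {α : Type} (w p : List α) : ℕ :=
  Nat.card {i : Fin w.length // ∀ j : ℕ, j < p.length →
    w[(i.val + j) % w.length]? = p[j]?}

/-! ### Sequence graphs (Definition 2) -/

/-- A sequence graph of order `k` (Definition 2): a directed multigraph whose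
edges are labeled with `k`-mers and whose nodes are labeled with `(k-1)`-mers,
consistently. -/
structure SeqGraph (k : ℕ) where
  V : Type
  E : Type
  src : E → V
  tgt : E → V
  elabel : E → Str
  vlabel : V → Str
  elabel_length : ∀ e, (elabel e).length = k
  vlabel_length : ∀ v, (vlabel v).length = k - 1
  label_src : ∀ e, vlabel (src e) = (elabel e).take (k - 1)
  label_tgt : ∀ e, vlabel (tgt e) = (elabel e).drop 1

/-- `w` is a Chinese Postman cycle of the sequence graph `Γ` (a closed walk
traversing every edge at least once) that spells out the circular sequence
`s`, up to cyclic shift. -/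
def SeqGraph.CPSpells {k : ℕ} (Γ : SeqGraph k) {G : ℕ} (s : ZMod G → Sym)
    (w : List Γ.E) : Prop :=
  ClosedChain Γ.src Γ.tgt w ∧ (∀ e : Γ.E, e ∈ w) ∧ w.length = G ∧
    ∃ t₀ : ZMod G, ∀ (i : ℕ) (h : i < w.length),
      (Γ.elabel (w.get ⟨i, h⟩)).headD 0 = s (t₀ + (i : ZMod G))

/-- A sequence graph is sufficient for `s` (Definition 4) if some Chinese
Postman cycle spells out `s` up to cyclic shift. -/
def SeqGraph.Sufficient {k : ℕ} (Γ : SeqGraph k) {G : ℕ} (s : ZMod G → Sym) : Prop :=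
  ∃ w, Γ.CPSpells s w

/-- `G[s]`: the multigraph obtained from a sequence graph by assigning each edge
the multiplicity with which the given Chinese Postman cycle `w` traverses it. -/
def SeqGraph.toMG {k : ℕ} (Γ : SeqGraph k) (w : List Γ.E) : MultiGraph :=
  ⟨Γ.V, Γ.E, Γ.src, Γ.tgt, fun e => countIn w e⟩

/-- The cycle sequence graph of order `k` of a circular sequence `s`:
the directed cycle on `ZMod G` with edge `i → i+1` labeled `s[i : i+k-1]`. -/
def cycleSeqGraph {G : ℕ} (s : ZMod G → Sym) (k : ℕ) : SeqGraph k where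
  V := ZMod G
  E := ZMod G
  src i := i
  tgt i := i + 1
  elabel i := substr s i k
  vlabel i := substr s i (k - 1)
  elabel_length e := substr_length s e k
  vlabel_length v := substr_length s v (k - 1)
  label_src e := (substr_take s e k).symm
  label_tgt e := (substr_drop s e k).symm

/-! ### The setting of the assembly problem -/

/-- The data of an assembly problem: a circular genome `s` of length `G`, a set
of (error-free, length-`L`) reads given by their starting positions `R`, and
the minimum-overlap parameter `k` of the greedy merging algorithm. -/
structure Setup where
  G : ℕ
  s : ZMod G → Sym
  R : Finset (ZMod G)
  L : ℕ
  k : ℕ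

/-- Edge positions of the initial sequence graph of Algorithm 1: the `j`-th
`k`-mer edge of the read starting at `p` (`0 ≤ j ≤ L - k`). -/
def Setup.EdgePos (S : Setup) : Type :=
  {p : ZMod S.G × ℕ // p.1 ∈ S.R ∧ p.2 + S.k ≤ S.L}

/-- Node positions of the initial sequence graph of Algorithm 1. -/
def Setup.NodePos (S : Setup) : Type :=
  {p : ZMod S.G × ℕ // p.1 ∈ S.R ∧ p.2 + S.k ≤ S.L + 1}

/-- Source node of an edge position. -/
def Setup.esrc (S : Setup) (e : S.EdgePos) : S.NodePos :=
  ⟨e.val, e.prop.1, le_trans e.prop.2 (Nat.le_succ _)⟩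

/-- Target node of an edge position. -/
def Setup.etgt (S : Setup) (e : S.EdgePos) : S.NodePos :=
  ⟨(e.val.1, e.val.2 + 1), e.prop.1, by have := e.prop.2; omega⟩

/-- The `k`-mer label of an edge position. -/
def Setup.edgeLabel (S : Setup) (e : S.EdgePos) : Str :=
  substr S.s (e.val.1 + (e.val.2 : ZMod S.G)) S.k

/-- The genome position corresponding to an edge position of a read. -/
def Setup.pos (S : Setup) (e : S.EdgePos) : ZMod S.G :=
  e.val.1 + (e.val.2 : ZMod S.G)

/-- A state of Algorithm 1 is an equivalence relation (`Setoid`) on edge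
positions, recording which edges have been merged; the induced relation on
node positions merges the endpoints of merged edges. -/
def Setup.nodeRel (S : Setup) (σ : Setoid S.EdgePos) :
    S.NodePos → S.NodePos → Prop :=
  fun v v' => ∃ e e', σ.r e e' ∧
    ((v = S.esrc e ∧ v' = S.esrc e') ∨ (v = S.etgt e ∧ v' = S.etgt e'))

/-- The node equivalence induced by an edge equivalence. -/
def Setup.nodeSetoid (S : Setup) (σ : Setoid S.EdgePos) : Setoid S.NodePos :=
  EqvGen.setoid (S.nodeRel σ)

/-- Source map on merged (quotient) edges. -/
def Setup.qsrc (S : Setup) (σ : Setoid S.EdgePos) :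
    Quotient σ → Quotient (S.nodeSetoid σ) :=
  Quotient.lift (fun e => Quotient.mk (S.nodeSetoid σ) (S.esrc e))
    (fun e e' h => Quotient.sound (EqvGen.rel _ _ ⟨e, e', h, Or.inl ⟨rfl, rfl⟩⟩))

/-- Target map on merged (quotient) edges. -/
def Setup.qtgt (S : Setup) (σ : Setoid S.EdgePos) :
    Quotient σ → Quotient (S.nodeSetoid σ) :=
  Quotient.lift (fun e => Quotient.mk (S.nodeSetoid σ) (S.etgt e))
    (fun e e' h => Quotient.sound (EqvGen.rel _ _ ⟨e, e', h, Or.inr ⟨rfl, rfl⟩⟩))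

/-- Label of a merged edge (via a representative; in the states reached by the
algorithm all representatives carry the same label). -/
def Setup.classLabel (S : Setup) (σ : Setoid S.EdgePos) (c : Quotient σ) : Str :=
  S.edgeLabel (Quotient.out c)

/-- The string spelled by a path of merged edges (`st(p)` in the paper). -/
def Setup.spellWalk (S : Setup) (σ : Setoid S.EdgePos)
    (w : List (Quotient σ)) : Str :=
  (w.map fun c => (S.classLabel σ c).headD 0) ++
    (match w.getLast? with
      | none => []
      | some c => (S.classLabel σ c).drop 1)

/-- `x` is a current graph suffix: it is spelled by a path ending at a node of
out-degree zero. -/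
def Setup.IsGraphSuffix (S : Setup) (σ : Setoid S.EdgePos) (x : Str) : Prop :=
  ∃ w : List (Quotient σ), w ≠ [] ∧
    List.Chain' (fun c d => S.qtgt σ c = S.qsrc σ d) w ∧
    (∃ c, w.getLast? = some c ∧ ∀ d : Quotient σ, S.qsrc σ d ≠ S.qtgt σ c) ∧
    S.spellWalk σ w = x

/-- `x` is a current graph prefix: it is spelled by a path starting at a node of
in-degree zero. -/
def Setup.IsGraphPrefix (S : Setup) (σ : Setoid S.EdgePos) (x : Str) : Prop :=
  ∃ w : List (Quotient σ), w ≠ [] ∧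
    List.Chain' (fun c d => S.qtgt σ c = S.qsrc σ d) w ∧
    (∃ c, w.head? = some c ∧ ∀ d : Quotient σ, S.qtgt σ d ≠ S.qsrc σ c) ∧
    S.spellWalk σ w = x

/-- The string `x` occurs in the read starting at `r` at (0-based) offset `a`. -/
def Setup.OccursAt (S : Setup) (x : Str) (r : ZMod S.G) (a : ℕ) : Prop :=
  r ∈ S.R ∧ a + x.length ≤ S.L ∧ substr S.s (r + (a : ZMod S.G)) x.length = x

/-- `x` appears in more than one read. -/
def Setup.InMultipleReads (S : Setup) (x : Str) : Prop :=
  ∃ r a r' b, r ≠ r' ∧ S.OccursAt x r a ∧ S.OccursAt x r' b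

/-- At state `σ`, in the iteration treating matches of length `ℓ`, the algorithm
merges the occurrence of `x` at offset `a` of read `r` with the occurrence of
`x` at offset `b` of read `r'`. -/
def Setup.MergeOcc (S : Setup) (σ : Setoid S.EdgePos) (ℓ : ℕ) (x : Str)
    (r : ZMod S.G) (a : ℕ) (r' : ZMod S.G) (b : ℕ) : Prop :=
  x.length = ℓ ∧ S.k ≤ ℓ ∧ (S.IsGraphPrefix σ x ∨ S.IsGraphSuffix σ x) ∧
    S.InMultipleReads x ∧ S.OccursAt x r a ∧ S.OccursAt x r' b

/-- The pairs of edge positions identified during the iteration of Algorithm 1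
treating matches of length `ℓ`, from state `σ`. -/
def Setup.mergeRel (S : Setup) (σ : Setoid S.EdgePos) (ℓ : ℕ) :
    S.EdgePos → S.EdgePos → Prop :=
  fun e e' => ∃ x r a r' b j, S.MergeOcc σ ℓ x r a r' b ∧ j + S.k ≤ ℓ ∧
    e.val = (r, a + j) ∧ e'.val = (r', b + j)

/-- One iteration of Algorithm 1 (treating matches of length `ℓ`). -/
def Setup.stepDown (S : Setup) (σ : Setoid S.EdgePos) (ℓ : ℕ) :
    Setoid S.EdgePos :=
  σ ⊔ EqvGen.setoid (S.mergeRel σ ℓ)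

/-- The state of Algorithm 1 after `m` iterations (which have treated match
lengths `L, L-1, ..., L-m+1`); the initial state is the discrete equivalence. -/
def Setup.stateAfter (S : Setup) : ℕ → Setoid S.EdgePos
  | 0 => ⊥
  | m + 1 => S.stepDown (S.stateAfter m) (S.L - m)

/-- The final state of Algorithm 1 (after treating match lengths `L` down to `k`). -/
def Setup.finalState (S : Setup) : Setoid S.EdgePos :=
  S.stateAfter (S.L - S.k + 1)

/-- `w` is a Chinese Postman cycle of the sequence graph determined by the
state `σ` which spells out the genome `s` up to cyclic shift. -/
def Setup.CPSpells (S : Setup) (σ : Setoid S.EdgePos)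
    (w : List (Quotient σ)) : Prop :=
  ClosedChain (S.qsrc σ) (S.qtgt σ) w ∧ (∀ c : Quotient σ, c ∈ w) ∧
    w.length = S.G ∧
    ∃ t₀ : ZMod S.G, ∀ (i : ℕ) (h : i < w.length),
      (S.classLabel σ (w.get ⟨i, h⟩)).headD 0 = S.s (t₀ + (i : ZMod S.G))

/-- The sequence graph determined by the state `σ` is sufficient for the
assembly of `s` (Definition 4). -/
def Setup.Sufficient (S : Setup) (σ : Setoid S.EdgePos) : Prop :=
  ∃ w, S.CPSpells σ w

/-- `G[s]` for the sequence graph determined by the state `σ` and a Chinese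
Postman cycle `w` corresponding to `s`. -/
def Setup.stateMG (S : Setup) (σ : Setoid S.EdgePos)
    (w : List (Quotient σ)) : MultiGraph :=
  ⟨Quotient (S.nodeSetoid σ), Quotient σ, S.qsrc σ, S.qtgt σ, fun c => countIn w c⟩

/-! ### Hypotheses of Theorems 1 and 2 -/

/-- Every triple repeat of `s` is either all-bridged or all-unbridged by `R`. -/
def Setup.TripleOK (S : Setup) : Prop :=
  ∀ ℓ (t₁ t₂ t₃ : ZMod S.G), IsTripleRepeatAt S.s ℓ t₁ t₂ t₃ →
    ((BridgedCopy S.R S.L t₁ ℓ ∧ BridgedCopy S.R S.L t₂ ℓ ∧ BridgedCopy S.R S.L t₃ ℓ) ∨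
     (¬BridgedCopy S.R S.L t₁ ℓ ∧ ¬BridgedCopy S.R S.L t₂ ℓ ∧ ¬BridgedCopy S.R S.L t₃ ℓ))

/-- Every repeat of `s` of length at most `q` is doubly-bridged by `R`. -/
def Setup.ShortRepeatsDB (S : Setup) (q : ℕ) : Prop :=
  ∀ ℓ (t₁ t₂ : ZMod S.G), ℓ ≤ q → IsRepeatAt S.s ℓ t₁ t₂ →
    BridgedCopy S.R S.L t₁ ℓ ∧ BridgedCopy S.R S.L t₂ ℓ

/-- For every pair of linked repeats with link length `link` satisfying
`k - 1 ≤ link ≤ q`, at least one of the two repeats is doubly-bridged. -/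
def Setup.LinkedOK (S : Setup) (q : ℕ) : Prop :=
  ∀ ℓ m (a₁ a₂ b₁ b₂ : ZMod S.G) (link : ℕ),
    LinkedRepeats S.s ℓ m a₁ a₂ b₁ b₂ link → S.k - 1 ≤ link → link ≤ q →
    ((BridgedCopy S.R S.L a₁ ℓ ∧ BridgedCopy S.R S.L a₂ ℓ) ∨
     (BridgedCopy S.R S.L b₁ m ∧ BridgedCopy S.R S.L b₂ m))

/-! ### The contracted graph `G_{U(R)}` -/

/-- The repeat with copies at `t₁, t₂` of length `m` is a maximal repeat of `s`
that is **not** doubly-bridged by `R`, i.e. it belongs to `U(R)`. -/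
def Setup.InU (S : Setup) (m : ℕ) (t₁ t₂ : ZMod S.G) : Prop :=
  IsRepeatAt S.s m t₁ t₂ ∧
    ¬(BridgedCopy S.R S.L t₁ m ∧ BridgedCopy S.R S.L t₂ m)

/-- The generating relation contracting corresponding **edges** of the two
paths of each repeat in `U(R)` in the cycle sequence graph of order `k`. -/
def Setup.uEdgeRel (S : Setup) : ZMod S.G → ZMod S.G → Prop :=
  fun i j => ∃ (m : ℕ) (t₁ t₂ : ZMod S.G) (d : ℕ), S.InU m t₁ t₂ ∧ d + S.k < m ∧
    i = t₁ + (d : ZMod S.G) ∧ j = t₂ + (d : ZMod S.G)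

/-- The edge identification of the contracted graph `G_{U(R)}`. -/
def Setup.uEdgeSetoid (S : Setup) : Setoid (ZMod S.G) :=
  EqvGen.setoid S.uEdgeRel

/-- The generating relation contracting corresponding **nodes** of the two
paths of each repeat in `U(R)` in the cycle sequence graph of order `k`. -/
def Setup.uNodeRel (S : Setup) : ZMod S.G → ZMod S.G → Prop :=
  fun i j => ∃ (m : ℕ) (t₁ t₂ : ZMod S.G) (d : ℕ), S.InU m t₁ t₂ ∧ d + S.k ≤ m ∧
    i = t₁ + (d : ZMod S.G) ∧ j = t₂ + (d : ZMod S.G)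

/-- The node identification of the contracted graph `G_{U(R)}`. -/
def Setup.uNodeSetoid (S : Setup) : Setoid (ZMod S.G) :=
  EqvGen.setoid S.uNodeRel

theorem Setup.uEdge_imp_uNode (S : Setup) :
    ∀ i j : ZMod S.G, EqvGen S.uEdgeRel i j → EqvGen S.uNodeRel i j := by
  intro i j h
  induction h with
  | rel a b hab =>
      obtain ⟨m, t₁, t₂, d, h1, h2, h3, h4⟩ := hab
      exact EqvGen.rel _ _ ⟨m, t₁, t₂, d, h1, by omega, h3, h4⟩
  | refl a => exact EqvGen.refl a
  | symm a b _ ih => exact EqvGen.symm _ _ ih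
  | trans a b c _ _ ih1 ih2 => exact EqvGen.trans _ _ _ ih1 ih2

theorem Setup.uEdge_imp_uNode_succ (S : Setup) :
    ∀ i j : ZMod S.G, EqvGen S.uEdgeRel i j → EqvGen S.uNodeRel (i + 1) (j + 1) := by
  intro i j h
  induction h with
  | rel a b hab =>
      obtain ⟨m, t₁, t₂, d, h1, h2, h3, h4⟩ := hab
      refine EqvGen.rel _ _ ⟨m, t₁, t₂, d + 1, h1, by omega, ?_, ?_⟩
      · rw [h3]; push_cast; ring
      · rw [h4]; push_cast; ring
  | refl a => exact EqvGen.refl _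
  | symm a b _ ih => exact EqvGen.symm _ _ ih
  | trans a b c _ _ ih1 ih2 => exact EqvGen.trans _ _ _ ih1 ih2

/-- Source map of the contracted graph `G_{U(R)}`. -/
def Setup.qsrcU (S : Setup) : Quotient S.uEdgeSetoid → Quotient S.uNodeSetoid :=
  Quotient.lift (fun i => Quotient.mk S.uNodeSetoid i)
    (fun i j h => Quotient.sound (S.uEdge_imp_uNode i j h))

/-- Target map of the contracted graph `G_{U(R)}`. -/
def Setup.qtgtU (S : Setup) : Quotient S.uEdgeSetoid → Quotient S.uNodeSetoid :=
  Quotient.lift (fun i => Quotient.mk S.uNodeSetoid (i + 1))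
    (fun i j h => Quotient.sound (S.uEdge_imp_uNode_succ i j h))

/-- Out-degree of a node of `G_{U(R)}`. -/
def Setup.uOutDeg (S : Setup) (v : Quotient S.uNodeSetoid) : ℕ :=
  Nat.card {c : Quotient S.uEdgeSetoid // S.qsrcU c = v}

/-- In-degree of a node of `G_{U(R)}`. -/
def Setup.uInDeg (S : Setup) (v : Quotient S.uNodeSetoid) : ℕ :=
  Nat.card {c : Quotient S.uEdgeSetoid // S.qtgtU c = v}

/-- The `k`-mer label of an edge of `G_{U(R)}` (via a representative). -/
def Setup.uClassLabel (S : Setup) (c : Quotient S.uEdgeSetoid) : Str :=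
  substr S.s (Quotient.out c) S.k

/-- `w` is a Chinese Postman cycle of `G_{U(R)}` spelling the genome `s`
up to cyclic shift. -/
def Setup.uCPSpells (S : Setup) (w : List (Quotient S.uEdgeSetoid)) : Prop :=
  ClosedChain S.qsrcU S.qtgtU w ∧ (∀ c : Quotient S.uEdgeSetoid, c ∈ w) ∧
    w.length = S.G ∧
    ∃ t₀ : ZMod S.G, ∀ (i : ℕ) (h : i < w.length),
      (S.uClassLabel (w.get ⟨i, h⟩)).headD 0 = S.s (t₀ + (i : ZMod S.G))

/-- `G_{U(R)}[s]` for a Chinese Postman cycle `w` corresponding to `s`. -/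
def Setup.uMG (S : Setup) (w : List (Quotient S.uEdgeSetoid)) : MultiGraph :=
  ⟨Quotient S.uNodeSetoid, Quotient S.uEdgeSetoid, S.qsrcU, S.qtgtU,
    fun c => countIn w c⟩

/-- The list of first symbols of the edge labels along a walk of `G_{U(R)}`. -/
def Setup.uHeads (S : Setup) (w : List (Quotient S.uEdgeSetoid)) : List Sym :=
  w.map (fun c => (S.uClassLabel c).headD 0)

/-- The map sending an edge class of the algorithm's graph to the edge class of
`G_{U(R)}` of (a representative of) its genome position. -/
def Setup.posQ (S : Setup) (σ : Setoid S.EdgePos) (c : Quotient σ) :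
    Quotient S.uEdgeSetoid :=
  Quotient.mk S.uEdgeSetoid (S.pos (Quotient.out c))

/-! ### Multigraphs given by a multiplicity function, and the BEST theorem -/

/-- Out-degree in a multigraph given by a multiplicity function `m` on ordered
pairs of vertices. -/
def outDegF {V : Type} [Fintype V] (m : V → V → ℕ) (v : V) : ℕ := ∑ u : V, m v u

/-- In-degree in a multigraph given by a multiplicity function. -/
def inDegF {V : Type} [Fintype V] (m : V → V → ℕ) (v : V) : ℕ := ∑ u : V, m u v

/-- The parallel edge copies of the multigraph with multiplicity function `m`:
the `c`-th copy of the edge from `u` to `v`, for `c < m u v`. -/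
def EdgeCopy {V : Type} (m : V → V → ℕ) : Type :=
  {t : V × V × ℕ // t.2.2 < m t.1 t.2.1}

/-- Source of an edge copy. -/
def EdgeCopy.src {V : Type} {m : V → V → ℕ} (e : EdgeCopy m) : V := e.val.1

/-- Target of an edge copy. -/
def EdgeCopy.tgt {V : Type} {m : V → V → ℕ} (e : EdgeCopy m) : V := e.val.2.1

/-- An Eulerian circuit: a closed walk traversing every edge copy exactly once
(parallel copies counted as distinct). -/
def IsEulerCircuit {V : Type} (m : V → V → ℕ) (w : List (EdgeCopy m)) : Prop :=
  ClosedChain EdgeCopy.src EdgeCopy.tgt w ∧ ∀ e : EdgeCopy m, countIn w e = 1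

/-- Forget the copy indices along a walk, leaving the sequence of traversed
ordered pairs of vertices. -/
def projEdges {V : Type} {m : V → V → ℕ} (w : List (EdgeCopy m)) : List (V × V) :=
  w.map (fun e => (e.val.1, e.val.2.1))

/-- Connectivity on the vertices of positive degree. -/
def FConnected {V : Type} [Fintype V] (m : V → V → ℕ) : Prop :=
  ∀ u v : V, 0 < outDegF m u + inDegF m u → 0 < outDegF m v + inDegF m v →
    Relation.ReflTransGen (fun a b => 0 < m a b) u v

/-- The vertex map following the chosen out-edges of a candidate arborescence. -/
def arbStep {V : Type} {m : V → V → ℕ} (t : V → Option (EdgeCopy m)) (v : V) : V :=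
  match t v with
  | none => v
  | some e => e.tgt

/-- An arborescence of the multigraph `m` rooted at `r` (directed toward the
root, spanning the vertices of positive degree): every vertex of positive
degree other than `r` has exactly one chosen out-edge copy, and following the
chosen edges leads to `r`. -/
def IsArborescence {V : Type} [Fintype V] (m : V → V → ℕ) (r : V)
    (t : V → Option (EdgeCopy m)) : Prop :=
  (∀ v, t v = none ↔ (v = r ∨ outDegF m v + inDegF m v = 0)) ∧
  (∀ v e, t v = some e → e.src = v) ∧
  (∀ v, 0 < outDegF m v + inDegF m v → ∃ n : ℕ, (arbStep t)^[n] v = r)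

/-- `T_G`: the number of arborescences rooted at `r` (parallel copies distinct). -/
def numArbor {V : Type} [Fintype V] (m : V → V → ℕ) (r : V) : ℕ :=
  Nat.card {t : V → Option (EdgeCopy m) // IsArborescence m r t}

/-- Eulerian cycles of the multigraph `m` up to rotation (i.e. with no
distinguished starting point), with parallel copies still distinct. -/
def RotClasses {V : Type} (m : V → V → ℕ) : Type :=
  Quot (fun w w' : {w : List (EdgeCopy m) // IsEulerCircuit m w} =>
    ∃ n : ℕ, w'.val = w.val.rotate n)

/-- Two rotation classes of Eulerian cycles are identified up to edge
multiplicity if they traverse the same cyclic sequence of ordered vertex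
pairs, i.e. one is obtained from the other by permuting the traversals of
parallel edge copies (and rotating). -/
def SameProjClass {V : Type} {m : V → V → ℕ} (qc qc' : RotClasses m) : Prop :=
  ∃ w w' : {w : List (EdgeCopy m) // IsEulerCircuit m w},
    Quot.mk _ w = qc ∧ Quot.mk _ w' = qc' ∧
    ∃ n : ℕ, projEdges w'.val = (projEdges w.val).rotate n

/-- The number of Eulerian cycles of the multigraph `m`, distinct up to edge
multiplicity (and up to rotation). -/
def ecF {V : Type} (m : V → V → ℕ) : ℕ :=
  Nat.card (Quot (fun w w' : {w : List (EdgeCopy m) // IsEulerCircuit m w} =>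
    ∃ n : ℕ, projEdges w'.val = (projEdges w.val).rotate n))

/-! ### Auxiliary lemmas for the k-mer graph theorem -/

theorem aux_countIn_of_get {α : Type} (w : List α) {n : ℕ} [NeZero n]
    (hlen : w.length = n) (f : ZMod n → α)
    (hf : ∀ (i : ℕ) (h : i < w.length), w.get ⟨i, h⟩ = f (i : ZMod n)) (a : α) :
    countIn w a = Nat.card {t : ZMod n // f t = a} := by
  apply Nat.card_congr
  refine ⟨fun p => ⟨((p.1.val : ℕ) : ZMod n), ?_⟩, fun q => ⟨⟨q.1.val, by
      rw [hlen]; exact ZMod.val_lt q.1⟩, ?_⟩, ?_, ?_⟩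
  · rw [← hf p.1.val p.1.2]; exact p.2
  · rw [hf q.1.val (by rw [hlen]; exact ZMod.val_lt q.1),
      ZMod.natCast_rightInverse q.1]; exact q.2
  · rintro ⟨i, hi⟩
    apply Subtype.ext; apply Fin.ext
    simp only [ZMod.val_natCast]
    exact Nat.mod_eq_of_lt (by omega)
  · rintro ⟨t, ht⟩
    apply Subtype.ext
    exact ZMod.natCast_rightInverse t

theorem aux_Ckmul_count {n : ℕ} (hn : 0 < n) (x : ZMod n → Sym) (k : ℕ) (e : Str) :
    Multiset.count e (Ckmul hn x k) = Nat.card {t : ZMod n // substr x t k = e} := by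
  haveI : NeZero n := ⟨hn.ne'⟩
  classical
  rw [Ckmul, Multiset.count_map, Nat.card_eq_fintype_card, Fintype.card_subtype,
    Finset.card, Finset.filter_val]
  congr 1
  exact Multiset.filter_congr (fun t _ => by exact eq_comm)

theorem aux_Ckmul_card {n : ℕ} (hn : 0 < n) (x : ZMod n → Sym) (k : ℕ) :
    Multiset.card (Ckmul hn x k) = n := by
  haveI : NeZero n := ⟨hn.ne'⟩
  rw [Ckmul, Multiset.card_map]
  exact Finset.card_univ.trans (ZMod.card n)

theorem aux_mem_countIn_pos {α : Type} {w : List α} {a : α} (h : a ∈ w) :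
    0 < countIn w a := by
  obtain ⟨i, hi⟩ := List.mem_iff_get.mp h
  haveI : Nonempty {i : Fin w.length // w.get i = a} := ⟨⟨i, hi⟩⟩
  exact Nat.card_pos

theorem aux_euler_exists {G : ℕ} {s : ZMod G → Sym} {k : ℕ} {w : List Str}
    (hw : (kmerGraph s k).IsEulerianCycle w) {e : Str} (he : e ∈ w) :
    ∃ t : ZMod G, substr s t k = e := by
  have h1 : 0 < countIn w e := aux_mem_countIn_pos he
  erw [hw.2 e] at h1
  simp only [kmerGraph] at h1
  obtain ⟨⟨⟨t, ht⟩⟩, -⟩ := Nat.card_pos_iff.mp h1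
  exact ⟨t, ht⟩

theorem aux_euler_length {G : ℕ} {s : ZMod G → Sym} {k : ℕ} {w : List Str}
    (hw : (kmerGraph s k).IsEulerianCycle w) (i : ℕ) (h : i < w.length) :
    (w.getD i []).length = k := by
  obtain ⟨t, ht⟩ := aux_euler_exists hw (List.getElem_mem h)
  rw [List.getD_eq_getElem _ _ h, ← ht, substr_length]

theorem aux_euler_chain {G : ℕ} {s : ZMod G → Sym} {k : ℕ} {w : List Str}
    (hw : (kmerGraph s k).IsEulerianCycle w) (i : ℕ) (h : i < w.length) :
    (w.getD i []).drop 1 = (w.getD ((i + 1) % w.length) []).take (k - 1) := by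
  obtain ⟨⟨hne, hch, hlast⟩, -⟩ := hw
  have hpos : 0 < w.length := List.length_pos_iff.mpr hne
  rcases Nat.lt_or_ge (i + 1) w.length with h2 | h2
  · rw [Nat.mod_eq_of_lt h2, List.getD_eq_getElem _ _ h, List.getD_eq_getElem _ _ h2]
    exact List.isChain_iff_getElem.mp hch i h2
  · have hi : i = w.length - 1 := by omega
    subst hi
    have h3 : (w.length - 1 + 1) % w.length = 0 := by
      rw [Nat.sub_add_cancel hpos, Nat.mod_self]
    rw [h3, List.getD_eq_getElem _ _ h, List.getD_eq_getElem _ _ hpos]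
    apply hlast
    · erw [List.getLast?_eq_getElem?]
      exact List.getElem?_eq_getElem h
    · erw [List.head?_eq_getElem?]
      exact List.getElem?_eq_getElem hpos

theorem aux_euler_spell {G : ℕ} {s : ZMod G → Sym} {k : ℕ} (hk : 2 ≤ k) {w : List Str}
    (hw : (kmerGraph s k).IsEulerianCycle w) :
    ∀ j, j < k → ∀ i, i < w.length →
      (w.getD i []).getD j 0 = (w.getD ((i + j) % w.length) []).headD 0 := by
  have hpos : 0 < w.length := List.length_pos_iff.mpr hw.1.1
  intro j
  induction j with
  | zero =>
      intro _ i hi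
      rw [Nat.add_zero, Nat.mod_eq_of_lt hi, List.headD_eq_head?,
        List.head?_eq_getElem?, List.getD_eq_getElem?_getD]
  | succ j ih =>
      intro hj i hi
      have h1 : ∀ l : List Sym, l.getD (j + 1) 0 = (l.drop 1).getD j 0 := by
        intro l
        rw [List.getD_eq_getElem?_getD, List.getD_eq_getElem?_getD, List.getElem?_drop,
          Nat.add_comm 1 j]
      have h2 : ∀ l : List Sym, (l.take (k - 1)).getD j 0 = l.getD j 0 := by
        intro l
        rw [List.getD_eq_getElem?_getD, List.getD_eq_getElem?_getD, List.getElem?_take,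
          if_pos (by omega)]
      have hi1 : (i + 1) % w.length < w.length := Nat.mod_lt _ hpos
      have he : i + (j + 1) = i + 1 + j := by omega
      rw [h1, aux_euler_chain hw i hi, h2, ih (by omega) _ hi1, Nat.mod_add_mod, he]

theorem aux_kmer_eq {G : ℕ} {s : ZMod G → Sym} {k : ℕ} (hk : 2 ≤ k) {w : List Str}
    (hw : (kmerGraph s k).IsEulerianCycle w) {n : ℕ} [NeZero n] (hlen : w.length = n)
    (x : ZMod n → Sym) (hx : ∀ t : ZMod n, x t = (w.getD t.val []).headD 0)
    (i : ℕ) (hi : i < n) : substr x ((i : ℕ) : ZMod n) k = w.getD i [] := by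
  have hli : i < w.length := by omega
  apply List.ext_getElem
  · rw [substr_length, aux_euler_length hw i hli]
  · intro j h1 h2
    rw [substr_getElem]
    have hc : ((i : ZMod n) + (j : ZMod n)) = ((i + j : ℕ) : ZMod n) := by push_cast; ring
    have h3 : j < k := by rwa [substr_length] at h1
    rw [hc, hx, ZMod.val_natCast, ← hlen,
      ← aux_euler_spell hk hw j h3 i hli, List.getD_eq_getElem _ _ h2]

theorem aux_euler_comp {G : ℕ} (hG : 0 < G) (s : ZMod G → Sym) {k : ℕ} (hk : 2 ≤ k)
    {w : List Str} (hw : (kmerGraph s k).IsEulerianCycle w)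
    {n : ℕ} (hn : 0 < n) (hlen : w.length = n) (x : ZMod n → Sym)
    (hx : ∀ t : ZMod n, x t = (w.getD t.val []).headD 0) :
    Ckmul hn x k = Ckmul hG s k := by
  haveI : NeZero n := ⟨hn.ne'⟩
  classical
  ext e
  rw [aux_Ckmul_count, aux_Ckmul_count]
  have h1 : countIn w e = Nat.card {t : ZMod n // substr x t k = e} := by
    apply aux_countIn_of_get w hlen
    intro i h
    rw [show w.get ⟨i, h⟩ = w.getD i [] from (List.getD_eq_getElem _ _ h).symm]
    exact (aux_kmer_eq hk hw hlen x hx i (by omega)).symm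
  have h2 : countIn w e = (kmerGraph s k).mult e := hw.2 e
  rw [← h1, h2]
  rfl

theorem aux_euler_glen {G : ℕ} (hG : 0 < G) {s : ZMod G → Sym} {k : ℕ} (hk : 2 ≤ k)
    {w : List Str} (hw : (kmerGraph s k).IsEulerianCycle w) : w.length = G := by
  have hn : 0 < w.length := List.length_pos_iff.mpr hw.1.1
  have h := aux_euler_comp hG s hk hw hn rfl
    (fun t => (w.getD t.val []).headD 0) (fun t => rfl)
  have h2 := congrArg Multiset.card h
  rwa [aux_Ckmul_card, aux_Ckmul_card] at h2

theorem aux_genomeWalk_eq {G' : ℕ} (x : ZMod G' → Sym) (k : ℕ) :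
    genomeWalk x k = (List.range G').map (fun i : ℕ => substr x ((i : ℕ) : ZMod G') k) := by
  simp only [genomeWalk, List.bind_eq_flatMap]
  rw [show ((List.range G').flatMap fun a : ℕ => pure (↑a : ZMod G'))
      = List.map (fun a : ℕ => (↑a : ZMod G')) (List.range G') from
    List.flatMap_pure_eq_map _ _, List.map_map]
  rfl

theorem aux_genomeWalk_length {G' : ℕ} (x : ZMod G' → Sym) (k : ℕ) :
    (genomeWalk x k).length = G' := by
  rw [aux_genomeWalk_eq, List.length_map, List.length_range]

theorem aux_genomeWalk_getElem {G' : ℕ} (x : ZMod G' → Sym) (k : ℕ) (i : ℕ)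
    (h : i < (genomeWalk x k).length) :
    (genomeWalk x k)[i] = substr x ((i : ℕ) : ZMod G') k := by
  have h' : i < ((List.range G').map
      (fun i : ℕ => substr x ((i : ℕ) : ZMod G') k)).length := by
    rw [← aux_genomeWalk_eq]; exact h
  rw [List.getElem_of_eq (aux_genomeWalk_eq x k) h, List.getElem_map, List.getElem_range]

theorem aux_listHeads_getD (w : List Str) (m : ℕ) (hm : m < w.length) :
    (listHeads w).getD m 0 = (w.getD m []).headD 0 := by
  have hlm : m < (listHeads w).length := by
    rw [listHeads, List.length_map]; exact hm
  rw [List.getD_eq_getElem _ _ hlm, List.getD_eq_getElem _ _ hm]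
  simp only [listHeads, List.getElem_map]

theorem aux_part1 {G : ℕ} (hG : 0 < G) (s : ZMod G → Sym) {k : ℕ} (hk : 2 ≤ k)
    {G' : ℕ} (hG' : 0 < G') (x : ZMod G' → Sym)
    (hx : Ckmul hG' x k = Ckmul hG s k) :
    (kmerGraph s k).IsEulerianCycle (genomeWalk x k) := by
  haveI : NeZero G' := ⟨hG'.ne'⟩
  have hlen := aux_genomeWalk_length x k
  constructor
  · refine ⟨?_, ?_, ?_⟩
    · intro h
      rw [h] at hlen
      change (0 : ℕ) = G' at hlen
      omega
    · apply List.isChain_iff_getElem.mpr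
      intro i hi
      change i + 1 < (genomeWalk x k).length at hi
      show ((genomeWalk x k).get ⟨i, by omega⟩).drop 1
        = ((genomeWalk x k).get ⟨i + 1, by omega⟩).take (k - 1)
      simp only [List.get_eq_getElem, aux_genomeWalk_getElem]
      rw [substr_drop, substr_take]
      congr 1
      push_cast
      ring
    · intro e f hle hhe
      have hpos : 0 < (genomeWalk x k).length := by omega
      erw [List.getLast?_eq_getElem?, List.getElem?_eq_getElem (Nat.sub_lt hpos Nat.one_pos)] at hle
      erw [List.head?_eq_getElem?, List.getElem?_eq_getElem hpos] at hhe
      obtain rfl : e = (genomeWalk x k)[(genomeWalk x k).length - 1] :=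
        (Option.some_inj.mp hle).symm
      obtain rfl : f = (genomeWalk x k)[0]'(by omega) := (Option.some_inj.mp hhe).symm
      show ((genomeWalk x k)[(genomeWalk x k).length - 1]).drop 1
        = ((genomeWalk x k)[0]'(by omega)).take (k - 1)
      rw [aux_genomeWalk_getElem, aux_genomeWalk_getElem, substr_drop, substr_take, hlen]
      have h1 : ((G' - 1 : ℕ) : ZMod G') + 1 = ((G' : ℕ) : ZMod G') := by
        rw [← Nat.cast_add_one, Nat.sub_add_cancel hG']
      rw [h1, ZMod.natCast_self, Nat.cast_zero]
  · intro e
    classical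
    erw [aux_countIn_of_get (genomeWalk x k) hlen (fun t => substr x t k)
      (fun i h => by rw [List.get_eq_getElem, aux_genomeWalk_getElem]) e,
      ← aux_Ckmul_count hG' x k e, hx, aux_Ckmul_count]
    rfl

theorem aux_spelled {G : ℕ} (hG : 0 < G) {s : ZMod G → Sym} {k : ℕ} (hk : 2 ≤ k)
    {w : List Str} (hw : (kmerGraph s k).IsEulerianCycle w) :
    genomeWalk (fun t : ZMod G => (w.getD t.val []).headD 0) k = w := by
  haveI : NeZero G := ⟨hG.ne'⟩
  have hlen := aux_euler_glen hG hk hw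
  apply List.ext_getElem
  · rw [aux_genomeWalk_length]; omega
  · intro i h1 h2
    rw [aux_genomeWalk_getElem,
      aux_kmer_eq hk hw hlen _ (fun t => rfl) i (by rwa [aux_genomeWalk_length] at h1),
      List.getD_eq_getElem _ _ h2]

theorem aux_genomeWalk_shift {G : ℕ} [NeZero G] (x : ZMod G → Sym) (k : ℕ)
    (r : ZMod G) :
    genomeWalk (fun i => x (i + r)) k = (genomeWalk x k).rotate r.val := by
  apply List.ext_getElem
  · rw [aux_genomeWalk_length, List.length_rotate, aux_genomeWalk_length]
  · intro i h1 h2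
    rw [List.getElem_rotate, aux_genomeWalk_getElem, aux_genomeWalk_getElem,
      aux_genomeWalk_length]
    apply List.ext_getElem
    · rw [substr_length, substr_length]
    · intro j hj1 hj2
      rw [substr_getElem, substr_getElem, ZMod.natCast_mod, Nat.cast_add,
        ZMod.natCast_rightInverse r]
      congr 1
      ring

theorem aux_spell_genomeWalk {G : ℕ} [NeZero G] {k : ℕ} (hk : 2 ≤ k)
    (x : ZMod G → Sym) (t : ZMod G) :
    ((genomeWalk x k).getD t.val []).headD 0 = x t := by
  have h : t.val < (genomeWalk x k).length := by
    rw [aux_genomeWalk_length]; exact ZMod.val_lt t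
  rw [List.getD_eq_getElem _ _ h, aux_genomeWalk_getElem,
    ZMod.natCast_rightInverse t, List.headD_eq_head?, List.head?_eq_getElem?,
    List.getElem?_eq_getElem (by rw [substr_length]; omega), Option.getD_some,
    substr_getElem, Nat.cast_zero, add_zero]

theorem aux_rot_to_shift {G : ℕ} (hG : 0 < G) {k : ℕ} (hk : 2 ≤ k)
    (x x' : ZMod G → Sym) {m : ℕ}
    (h : genomeWalk x' k = (genomeWalk x k).rotate m) :
    ∀ i : ZMod G, x' i = x (i + (m : ZMod G)) := by
  haveI : NeZero G := ⟨hG.ne'⟩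
  intro t
  rw [← aux_spell_genomeWalk hk x' t, h]
  have hGl : (genomeWalk x k).length = G := aux_genomeWalk_length x k
  have hv : (t.val + m) % G = (t + (m : ZMod G)).val := by
    rw [ZMod.val_add, ZMod.val_natCast, Nat.add_mod_mod]
  rw [List.getD_eq_getElem?_getD,
    List.getElem?_rotate (show t.val < (genomeWalk x k).length by
      rw [hGl]; exact ZMod.val_lt t), hGl, hv,
    ← List.getD_eq_getElem?_getD, aux_spell_genomeWalk hk x]

theorem aux_heads_rot {G : ℕ} (hG : 0 < G) {s : ZMod G → Sym} {k : ℕ} (hk : 2 ≤ k)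
    {w w' : List Str} (hw : (kmerGraph s k).IsEulerianCycle w)
    (hw' : (kmerGraph s k).IsEulerianCycle w') (m : ℕ)
    (h : listHeads w' = (listHeads w).rotate m) :
    w' = w.rotate m := by
  haveI : NeZero G := ⟨hG.ne'⟩
  have hlw := aux_euler_glen hG hk hw
  have hlw' := aux_euler_glen hG hk hw'
  have hlh : (listHeads w).length = G := by rw [listHeads, List.length_map, hlw]
  have hfun : (fun t : ZMod G => (w'.getD t.val []).headD 0)
      = fun i : ZMod G => (w.getD ((i + (m : ZMod G)).val) []).headD 0 := by
    funext t
    rw [← aux_listHeads_getD w' t.val (by rw [hlw']; exact ZMod.val_lt t), h]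
    have hv : (t.val + m) % G = (t + (m : ZMod G)).val := by
      rw [ZMod.val_add, ZMod.val_natCast, Nat.add_mod_mod]
    rw [List.getD_eq_getElem?_getD,
      List.getElem?_rotate (show t.val < (listHeads w).length by
        rw [hlh]; exact ZMod.val_lt t), hlh, hv,
      ← List.getD_eq_getElem?_getD,
      aux_listHeads_getD w _ (by rw [hlw]; exact ZMod.val_lt _)]
  have e1 : genomeWalk (fun t : ZMod G => (w.getD t.val []).headD 0) k = w :=
    aux_spelled hG hk hw
  have e2 : genomeWalk (fun t : ZMod G => (w'.getD t.val []).headD 0) k = w' :=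
    aux_spelled hG hk hw'
  have e4 : genomeWalk (fun t : ZMod G => (w'.getD t.val []).headD 0) k
      = (genomeWalk (fun t : ZMod G => (w.getD t.val []).headD 0) k).rotate
        ((m : ZMod G)).val := by
    rw [hfun]
    exact aux_genomeWalk_shift (fun t : ZMod G => (w.getD t.val []).headD 0) k (m : ZMod G)
  rw [← e2, e4, e1, ZMod.val_natCast, ← hlw, List.rotate_mod]

theorem aux_rotate_equiv_relB {G : ℕ} (s : ZMod G → Sym) (k : ℕ) :
    Equivalence (fun w w' : {w : List Str // (kmerGraph s k).IsEulerianCycle w} =>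
      ∃ n : ℕ, w'.val = w.val.rotate n) := by
  constructor
  · exact fun w => ⟨0, (List.rotate_zero _).symm⟩
  · rintro w w' ⟨n, hn⟩
    refine ⟨w.val.length - n % w.val.length, ?_⟩
    rw [hn, List.rotate_rotate, ← List.rotate_mod]
    have hpos : 0 < w.val.length := List.length_pos_iff.mpr w.2.1.1
    have h1 := Nat.mod_lt n hpos
    have h2 : (n + (w.val.length - n % w.val.length)) % w.val.length = 0 := by
      rw [← Nat.mod_add_mod,
        show n % w.val.length + (w.val.length - n % w.val.length) = w.val.length by omega,
        Nat.mod_self]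
    rw [h2, List.rotate_zero]
  · rintro a b c ⟨n, hn⟩ ⟨p, hp⟩
    exact ⟨n + p, by rw [hp, hn, List.rotate_rotate]⟩

/-- Every circular sequence `x` with `C_k(x) = C_k(s)` corresponds to an
Eulerian cycle of `B_k(s)`; every Eulerian cycle of `B_k(s)` spells a circular
sequence `x` with `C_k(x) = C_k(s)`; two Eulerian cycles distinct up to edge
multiplicity spell distinct circular sequences; consequently the number of
circular sequences (up to cyclic shift) with the `k`-mer composition of `s`
equals `ec(B_k(s))`. -/

theorem kmer_graph_cycles_biject_sequences {G : ℕ} (hG : 0 < G)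
    (s : ZMod G → Sym) (k : ℕ) (hk : 2 ≤ k) :
    (∀ (G' : ℕ) (hG' : 0 < G') (x : ZMod G' → Sym),
        Ckmul hG' x k = Ckmul hG s k →
        (kmerGraph s k).IsEulerianCycle (genomeWalk x k)) ∧
    (∀ w : List Str, (kmerGraph s k).IsEulerianCycle w →
        ∀ hw : 0 < (listHeads w).length,
          Ckmul hw (circOf (listHeads w)) k = Ckmul hG s k) ∧
    (∀ w w' : List Str, (kmerGraph s k).IsEulerianCycle w →
        (kmerGraph s k).IsEulerianCycle w' →
        ¬(∃ n : ℕ, w' = w.rotate n) →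
        ¬(∃ n : ℕ, listHeads w' = (listHeads w).rotate n)) ∧
    (Nat.card (Quot (fun x x' : {x : ZMod G → Sym // Ckmul hG x k = Ckmul hG s k} =>
        ∃ r : ZMod G, ∀ i : ZMod G, x'.val i = x.val (i + r))) =
      (kmerGraph s k).ec) := by
  refine ⟨fun G' hG' x hx => aux_part1 hG s hk hG' x hx, ?_, ?_, ?_⟩
  · intro w hwE hw0
    haveI : NeZero (listHeads w).length := ⟨hw0.ne'⟩
    have hlen : w.length = (listHeads w).length := by
      rw [listHeads, List.length_map]
    refine aux_euler_comp hG s hk hwE hw0 hlen (circOf (listHeads w)) ?_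
    intro t
    exact aux_listHeads_getD w t.val (by rw [hlen]; exact ZMod.val_lt t)
  · intro w w' hwE hwE' hne hcon
    obtain ⟨n, hn⟩ := hcon
    exact hne ⟨n, aux_heads_rot hG hk hwE hwE' n hn⟩
  · haveI : NeZero G := ⟨hG.ne'⟩
    show Nat.card _ = Nat.card (Quot (fun w w' :
        {w : List Str // (kmerGraph s k).IsEulerianCycle w} =>
      ∃ n : ℕ, w'.val = w.val.rotate n))
    have hwd : ∀ x x' : {x : ZMod G → Sym // Ckmul hG x k = Ckmul hG s k},
        (∃ r : ZMod G, ∀ i : ZMod G, x'.val i = x.val (i + r)) →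
        (Quot.mk (fun w w' : {w : List Str // (kmerGraph s k).IsEulerianCycle w} =>
            ∃ n : ℕ, w'.val = w.val.rotate n)
          ⟨genomeWalk x.val k, aux_part1 hG s hk hG x.val x.prop⟩ : Quot _) =
        Quot.mk _ ⟨genomeWalk x'.val k, aux_part1 hG s hk hG x'.val x'.prop⟩ := by
      rintro x x' ⟨r, hr⟩
      apply Quot.sound
      refine ⟨r.val, ?_⟩
      show genomeWalk x'.val k = (genomeWalk x.val k).rotate r.val
      rw [show x'.val = fun i => x.val (i + r) from funext hr]
      exact aux_genomeWalk_shift x.val k r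
    apply Nat.card_eq_of_bijective
      (Quot.lift (fun x : {x : ZMod G → Sym // Ckmul hG x k = Ckmul hG s k} =>
        (Quot.mk _ ⟨genomeWalk x.val k, aux_part1 hG s hk hG x.val x.prop⟩)) hwd)
    constructor
    · intro qa qb
      refine Quot.inductionOn qa ?_
      intro x
      refine Quot.inductionOn qb ?_
      intro x' hq
      have h2 := Quot.eq.mp hq
      obtain ⟨m, hm⟩ := (aux_rotate_equiv_relB s k).eqvGen_iff.mp h2
      apply Quot.sound
      exact ⟨(m : ZMod G), aux_rot_to_shift hG hk x.val x'.val hm⟩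
    · intro qb
      refine Quot.inductionOn qb ?_
      rintro ⟨w, hwE⟩
      refine ⟨Quot.mk _ ⟨fun t : ZMod G => (w.getD t.val []).headD 0,
        aux_euler_comp hG s hk hwE hG (aux_euler_glen hG hk hwE) _ (fun t => rfl)⟩, ?_⟩
      exact congrArg (Quot.mk _) (Subtype.ext (aux_spelled hG hk hwE))

end

end DNAAssembly
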